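/- Let f : ℝ^d → ℝ be C² with L_G-Lipschitz gradient and L_H-Lipschitz Hessian, and let x̄ be a critical point whose Hessian singular values are all at least μ > 0. Suppose ‖x - x̄‖ ≤ R with R ≤ min(μ²/(4L_H L_G), μ/(8ω₂L_G²)) for some ω₂ > 0, and suppose x₊ = x + u where u satisfies ‖∇²f(x)u + ∇f(x)‖ ≤ ω₂‖∇f(x)‖². Then ‖x₊ - x̄‖ ≤ ‖x - x̄‖²/(2R) ≤ ‖x - x̄‖/2 ≤ R/2. -/
import Mathlib

set_option maxHeartbeats 1000000


open RealInnerProductSpace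

/-- Quadratic convergence of an inexact Newton step near a nondegenerate critical
point (Lemma `quadratic_conv_crit`). -/
theorem inexact_newton_quadratic_convergence_near_critical_point
    {d : ℕ} (f : EuclideanSpace ℝ (Fin d) → ℝ)
    (Hf : EuclideanSpace ℝ (Fin d) → EuclideanSpace ℝ (Fin d) →L[ℝ] EuclideanSpace ℝ (Fin d))
    (L_G L_H μ ω₂ : ℝ) (hLG : 0 < L_G) (hLH : 0 < L_H) (hμ : 0 < μ) (hω : 0 < ω₂)
    (hf : ContDiff ℝ 2 f)
    (hHf : ∀ x, HasFDerivAt (gradient f) (Hf x) x)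
    (hLipG : ∀ x y, ‖gradient f x - gradient f y‖ ≤ L_G * ‖x - y‖)
    (hLipH : ∀ x y, ‖Hf x - Hf y‖ ≤ L_H * ‖x - y‖)
    (xbar : EuclideanSpace ℝ (Fin d)) (hcrit : gradient f xbar = 0)
    (hsv : ∀ u, μ * ‖u‖ ≤ ‖Hf xbar u‖)
    (R : ℝ) (hR : 0 < R)
    (hRle : R ≤ min (μ ^ 2 / (4 * L_H * L_G)) (μ / (8 * ω₂ * L_G ^ 2)))
    (x u xplus : EuclideanSpace ℝ (Fin d)) (hx : ‖x - xbar‖ ≤ R)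
    (hu : ‖Hf x u + gradient f x‖ ≤ ω₂ * ‖gradient f x‖ ^ 2)
    (hxplus : xplus = x + u) :
    ‖xplus - xbar‖ ≤ ‖x - xbar‖ ^ 2 / (2 * R) ∧
    ‖x - xbar‖ ^ 2 / (2 * R) ≤ ‖x - xbar‖ / 2 ∧
    ‖x - xbar‖ / 2 ≤ R / 2 := by
  subst hxplus
  have hR1 : R ≤ μ ^ 2 / (4 * L_H * L_G) := le_trans hRle (min_le_left _ _)
  have hR2 : R ≤ μ / (8 * ω₂ * L_G ^ 2) := le_trans hRle (min_le_right _ _)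
  have hR1' : R * (4 * L_H * L_G) ≤ μ ^ 2 := (le_div_iff₀ (by positivity)).mp hR1
  have hR2' : R * (8 * ω₂ * L_G ^ 2) ≤ μ := (le_div_iff₀ (by positivity)).mp hR2
  have hne : 0 ≤ ‖x - xbar‖ := norm_nonneg _
  have h2 : ‖x - xbar‖ ^ 2 / (2 * R) ≤ ‖x - xbar‖ / 2 := by
    rw [div_le_div_iff₀ (by positivity) (by norm_num)]
    nlinarith
  have h3 : ‖x - xbar‖ / 2 ≤ R / 2 := by linarith
  refine ⟨?_, h2, h3⟩
  -- handle the degenerate dimension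
  rcases Nat.eq_zero_or_pos d with hd | hd
  · subst hd
    have h0 : x + u - xbar = 0 := Subsingleton.elim _ _
    rw [h0, norm_zero]
    positivity
  -- μ ≤ L_G
  have hlipW : LipschitzWith (⟨L_G, hLG.le⟩ : NNReal) (gradient f) := by
    apply LipschitzWith.of_dist_le_mul
    intro a b
    rw [dist_eq_norm, dist_eq_norm]
    exact hLipG a b
  have hopnorm : ‖Hf xbar‖ ≤ L_G := (hHf xbar).le_of_lipschitz hlipW
  have hμLG : μ ≤ L_G := by
    set v : EuclideanSpace ℝ (Fin d) := EuclideanSpace.single ⟨0, hd⟩ (1 : ℝ) with hv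
    have hvn : ‖v‖ = 1 := by rw [hv, EuclideanSpace.norm_single]; norm_num
    have h1 := hsv v
    have h2 := (Hf xbar).le_opNorm v
    rw [hvn] at h1 h2
    linarith
  have h4' : 4 * L_H * R ≤ μ := by
    nlinarith [mul_le_mul_of_nonneg_left hμLG hμ.le, hR1']
  have hLHR : L_H * ‖x - xbar‖ ≤ μ / 4 := by
    nlinarith [mul_le_mul_of_nonneg_left hx hLH.le]
  -- lower bound on Hf x
  have hcoerc : ∀ v, 3 * μ / 4 * ‖v‖ ≤ ‖Hf x v‖ := by
    intro v
    have h1 := hsv v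
    have h2 : ‖Hf xbar v - Hf x v‖ ≤ L_H * ‖x - xbar‖ * ‖v‖ := by
      calc ‖Hf xbar v - Hf x v‖ = ‖(Hf xbar - Hf x) v‖ := by simp
        _ ≤ ‖Hf xbar - Hf x‖ * ‖v‖ :=
            (Hf xbar - Hf x).le_opNorm v
        _ ≤ L_H * ‖xbar - x‖ * ‖v‖ :=
            mul_le_mul_of_nonneg_right (hLipH xbar x) (norm_nonneg v)
        _ = L_H * ‖x - xbar‖ * ‖v‖ := by rw [norm_sub_rev]
    have h3 : ‖Hf xbar v‖ ≤ ‖Hf x v‖ + ‖Hf xbar v - Hf x v‖ := by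
      have := norm_add_le (Hf x v) (Hf xbar v - Hf x v)
      simpa using this
    have h4 : L_H * ‖x - xbar‖ * ‖v‖ ≤ μ / 4 * ‖v‖ :=
      mul_le_mul_of_nonneg_right hLHR (norm_nonneg v)
    linarith
  -- Taylor bound on the gradient along the segment
  have htay : ‖gradient f x - gradient f xbar - Hf x (x - xbar)‖ ≤
      L_H * ‖x - xbar‖ * ‖x - xbar‖ := by
    apply Convex.norm_image_sub_le_of_norm_hasFDerivWithin_le'
      (f' := Hf) (s := segment ℝ xbar x)
      (fun z _ => (hHf z).hasFDerivWithinAt) ?_ (convex_segment _ _)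
      (left_mem_segment _ _ _) (right_mem_segment _ _ _)
    intro z hz
    rcases hz with ⟨a, b, ha, hb, hab, rfl⟩
    have hzx : a • xbar + b • x - x = a • (xbar - x) := by
      have hb1 : b = 1 - a := by linarith
      subst hb1
      module
    have hnz : ‖a • xbar + b • x - x‖ ≤ ‖x - xbar‖ := by
      rw [hzx, norm_smul, norm_sub_rev]
      have : |a| = a := abs_of_nonneg ha
      rw [Real.norm_eq_abs, this]
      nlinarith [norm_nonneg (x - xbar)]
    calc ‖Hf (a • xbar + b • x) - Hf x‖ ≤ L_H * ‖a • xbar + b • x - x‖ := hLipH _ _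
      _ ≤ L_H * ‖x - xbar‖ := mul_le_mul_of_nonneg_left hnz hLH.le
  rw [hcrit, sub_zero] at htay
  have hg : ‖gradient f x‖ ≤ L_G * ‖x - xbar‖ := by
    have := hLipG x xbar
    rwa [hcrit, sub_zero] at this
  -- main estimate
  have hrewrite : x + u - xbar = (x - xbar) + u := by abel
  rw [hrewrite]
  have key : 3 * μ / 4 * ‖(x - xbar) + u‖ ≤ ‖Hf x ((x - xbar) + u)‖ := hcoerc _
  have hsplit : ‖Hf x ((x - xbar) + u)‖ ≤
      L_H * ‖x - xbar‖ * ‖x - xbar‖ + ω₂ * ‖gradient f x‖ ^ 2 := by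
    have heq : Hf x ((x - xbar) + u) =
        (Hf x (x - xbar) - gradient f x) + (Hf x u + gradient f x) := by
      rw [map_add]; abel
    rw [heq]
    calc ‖(Hf x (x - xbar) - gradient f x) + (Hf x u + gradient f x)‖ ≤
        ‖Hf x (x - xbar) - gradient f x‖ + ‖Hf x u + gradient f x‖ := norm_add_le _ _
      _ ≤ L_H * ‖x - xbar‖ * ‖x - xbar‖ + ω₂ * ‖gradient f x‖ ^ 2 := by
          apply add_le_add _ hu
          rw [norm_sub_rev]
          exact htay
  have hgsq : ω₂ * ‖gradient f x‖ ^ 2 ≤ ω₂ * (L_G * ‖x - xbar‖) ^ 2 := by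
    apply mul_le_mul_of_nonneg_left _ hω.le
    exact pow_le_pow_left₀ (norm_nonneg _) hg 2
  have chain : 3 * μ / 4 * ‖(x - xbar) + u‖ ≤
      (L_H + ω₂ * L_G ^ 2) * ‖x - xbar‖ ^ 2 := by
    have hring : L_H * ‖x - xbar‖ * ‖x - xbar‖ + ω₂ * (L_G * ‖x - xbar‖) ^ 2 =
        (L_H + ω₂ * L_G ^ 2) * ‖x - xbar‖ ^ 2 := by ring
    linarith
  rw [le_div_iff₀ (by positivity)]
  have h5 : 2 * R * (L_H + ω₂ * L_G ^ 2) ≤ 3 * μ / 4 := by nlinarith [h4', hR2']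
  have hA := mul_le_mul_of_nonneg_left chain (by positivity : (0:ℝ) ≤ 2 * R)
  have hB := mul_le_mul_of_nonneg_right h5 (sq_nonneg ‖x - xbar‖)
  have h6 : 3 * μ / 4 * (‖(x - xbar) + u‖ * (2 * R)) ≤ 3 * μ / 4 * ‖x - xbar‖ ^ 2 := by
    nlinarith [hA, hB]
  exact le_of_mul_le_mul_left h6 (by positivity)
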